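/- Let X be a Banach A-bimodule such that for every x'' ∈ X**, the map a'' ↦ x''a'' from A** to X** is weak-star to weak continuous. If every bounded derivation from A** into X*** is inner, then every bounded derivation from A into X* is inner; i.e., H¹(A**, X***) = 0 implies H¹(A, X*) = 0. -/

import Mathlib

set_option maxHeartbeats 1000000

open Filter Topology ContinuousLinearMap NormedSpace

namespace NormedSpace

/-- The topological dual of a seminormed space `E` (the former Mathlib `NormedSpace.Dual`). -/
def Dual (𝕜 : Type*) [NontriviallyNormedField 𝕜] (E : Type*) [SeminormedAddCommGroup E]
    [NormedSpace 𝕜 E] : Type _ :=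
  E →L[𝕜] 𝕜

variable (𝕜 : Type*) [NontriviallyNormedField 𝕜] (E : Type*) [SeminormedAddCommGroup E]
  [NormedSpace 𝕜 E]

noncomputable instance instSeminormedAddCommGroupDual : SeminormedAddCommGroup (Dual 𝕜 E) :=
  inferInstanceAs (SeminormedAddCommGroup (E →L[𝕜] 𝕜))

noncomputable instance instNormedSpaceDual : NormedSpace 𝕜 (Dual 𝕜 E) :=
  inferInstanceAs (NormedSpace 𝕜 (E →L[𝕜] 𝕜))

instance instFunLikeDual : FunLike (Dual 𝕜 E) E 𝕜 :=
  inferInstanceAs (FunLike (E →L[𝕜] 𝕜) E 𝕜)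

instance instLinearMapClassDual : LinearMapClass (Dual 𝕜 E) 𝕜 E 𝕜 :=
  inferInstanceAs (LinearMapClass (E →L[𝕜] 𝕜) 𝕜 E 𝕜)

instance instContinuousLinearMapClassDual : ContinuousLinearMapClass (Dual 𝕜 E) 𝕜 E 𝕜 :=
  inferInstanceAs (ContinuousLinearMapClass (E →L[𝕜] 𝕜) 𝕜 E 𝕜)

noncomputable instance instInhabitedDual : Inhabited (Dual 𝕜 E) :=
  ⟨0⟩

instance instCompleteSpaceDual [CompleteSpace 𝕜] : CompleteSpace (Dual 𝕜 E) :=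
  inferInstanceAs (CompleteSpace (E →L[𝕜] 𝕜))

end NormedSpace

noncomputable section ArensSetup

/-- The adjoint (transpose) of a continuous linear map between normed spaces. -/
def adjCLM {E F : Type*} [SeminormedAddCommGroup E] [NormedSpace ℝ E]
    [SeminormedAddCommGroup F] [NormedSpace ℝ F] (T : E →L[ℝ] F) :
    Dual ℝ F →L[ℝ] Dual ℝ E :=
  (ContinuousLinearMap.compL ℝ E F ℝ).flip T

@[simp] theorem adjCLM_apply {E F : Type*} [SeminormedAddCommGroup E] [NormedSpace ℝ E]
    [SeminormedAddCommGroup F] [NormedSpace ℝ F] (T : E →L[ℝ] F) (g : Dual ℝ F) (x : E) :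
    adjCLM T g x = g (T x) := rfl

/-- One-step Arens-type adjoint of a bounded bilinear map:
`ext1 β g' e = g' ∘ (β e)`. -/
def ext1 {E F G : Type*} [SeminormedAddCommGroup E] [NormedSpace ℝ E]
    [SeminormedAddCommGroup F] [NormedSpace ℝ F] [SeminormedAddCommGroup G] [NormedSpace ℝ G]
    (β : E →L[ℝ] F →L[ℝ] G) : Dual ℝ G →L[ℝ] E →L[ℝ] Dual ℝ F :=
  ((ContinuousLinearMap.compL ℝ F G ℝ).flip.comp β).flip

@[simp] theorem ext1_apply {E F G : Type*} [SeminormedAddCommGroup E] [NormedSpace ℝ E]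
    [SeminormedAddCommGroup F] [NormedSpace ℝ F] [SeminormedAddCommGroup G] [NormedSpace ℝ G]
    (β : E →L[ℝ] F →L[ℝ] G) (g' : Dual ℝ G) (e : E) (f : F) :
    ext1 β g' e f = g' (β e f) := rfl

/-- Triple adjoint: the (first) Arens extension of a bounded bilinear map to the
second duals. -/
def ext3 {E F G : Type*} [SeminormedAddCommGroup E] [NormedSpace ℝ E]
    [SeminormedAddCommGroup F] [NormedSpace ℝ F] [SeminormedAddCommGroup G] [NormedSpace ℝ G]
    (β : E →L[ℝ] F →L[ℝ] G) :
    Dual ℝ (Dual ℝ E) →L[ℝ] Dual ℝ (Dual ℝ F) →L[ℝ] Dual ℝ (Dual ℝ G) :=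
  ext1 (ext1 (ext1 β))

variable (A : Type*) [NonUnitalNormedRing A] [NormedSpace ℝ A]
  [SMulCommClass ℝ A A] [IsScalarTower ℝ A A] [CompleteSpace A]

/-- The first (left) Arens product on `A**`: `⟨a''b'', a'⟩ = ⟨a'', b''a'⟩`. -/
def fArens : Dual ℝ (Dual ℝ A) →L[ℝ] Dual ℝ (Dual ℝ A) →L[ℝ] Dual ℝ (Dual ℝ A) :=
  ext3 (ContinuousLinearMap.mul ℝ A)

/-- The second (right) Arens product on `A**`: `⟨a''∘b'', a'⟩ = ⟨b'', a'∘a''⟩`. -/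
def sArens : Dual ℝ (Dual ℝ A) →L[ℝ] Dual ℝ (Dual ℝ A) →L[ℝ] Dual ℝ (Dual ℝ A) :=
  (ext3 (ContinuousLinearMap.mul ℝ A).flip).flip

/-- `A` is Arens regular when the two Arens products on `A**` coincide. -/
def ArensRegular : Prop := fArens A = sArens A

variable {A}

/-- Weak-star to weak continuity for a map from the dual of `E` into `F`. -/
def WStarToWCont {E F : Type*} [SeminormedAddCommGroup E] [NormedSpace ℝ E]
    [SeminormedAddCommGroup F] [NormedSpace ℝ F] (f : Dual ℝ E → F) : Prop :=
  Continuous fun x : WeakDual ℝ E => toWeakSpace ℝ F (f (WeakDual.toStrongDual x))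

variable (A)

/-- The second adjoint `T'' : A** → A**` of `T : A → A`. -/
def secondAdj (T : A →L[ℝ] A) : Dual ℝ (Dual ℝ A) →L[ℝ] Dual ℝ (Dual ℝ A) :=
  adjCLM (adjCLM T)

/-- Left action of `A` on `A*`: `⟨a·a', b⟩ = ⟨a', ba⟩`. -/
def dualLeft : A →L[ℝ] Dual ℝ A →L[ℝ] Dual ℝ A :=
  (ext1 (ContinuousLinearMap.mul ℝ A).flip).flip

/-- Right action of `A` on `A*`: `⟨a'·a, b⟩ = ⟨a', ab⟩`. -/
def dualRight : Dual ℝ A →L[ℝ] A →L[ℝ] Dual ℝ A :=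
  ext1 (ContinuousLinearMap.mul ℝ A)

/-- Left action of `A**` (first Arens product) on `A***`. -/
def dualLeft2 : Dual ℝ (Dual ℝ A) →L[ℝ] Dual ℝ (Dual ℝ (Dual ℝ A)) →L[ℝ]
    Dual ℝ (Dual ℝ (Dual ℝ A)) :=
  (ext1 (fArens A).flip).flip

/-- Right action of `A**` (first Arens product) on `A***`. -/
def dualRight2 : Dual ℝ (Dual ℝ (Dual ℝ A)) →L[ℝ] Dual ℝ (Dual ℝ A) →L[ℝ]
    Dual ℝ (Dual ℝ (Dual ℝ A)) :=
  ext1 (fArens A)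

end ArensSetup

section BimoduleSetup

set_option maxHeartbeats 1000000

open Filter Topology ContinuousLinearMap NormedSpace

/-- A Banach `A`-bimodule: bounded bilinear left and right actions satisfying the
usual compatibility axioms. -/
structure BanachBimodule (A X : Type*) [NonUnitalNormedRing A] [NormedSpace ℝ A]
    [SMulCommClass ℝ A A] [IsScalarTower ℝ A A]
    [NormedAddCommGroup X] [NormedSpace ℝ X] [CompleteSpace X] where
  l : A →L[ℝ] X →L[ℝ] X
  r : X →L[ℝ] A →L[ℝ] X
  l_mul : ∀ a b x, l (a * b) x = l a (l b x)
  r_mul : ∀ x a b, r (r x a) b = r x (a * b)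
  l_r : ∀ a x b, l a (r x b) = r (l a x) b

variable {A X : Type*} [NonUnitalNormedRing A] [NormedSpace ℝ A]
  [SMulCommClass ℝ A A] [IsScalarTower ℝ A A] [CompleteSpace A]
  [NormedAddCommGroup X] [NormedSpace ℝ X] [CompleteSpace X]

/-- Left action of `A` on `X*`: `⟨a·f, x⟩ = ⟨f, x·a⟩`. -/
noncomputable def modDualLeft (M : BanachBimodule A X) : A →L[ℝ] Dual ℝ X →L[ℝ] Dual ℝ X :=
  (ext1 M.r.flip).flip

/-- Right action of `A` on `X*`: `⟨f·a, x⟩ = ⟨f, a·x⟩`. -/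
noncomputable def modDualRight (M : BanachBimodule A X) : Dual ℝ X →L[ℝ] A →L[ℝ] Dual ℝ X :=
  ext1 M.l

/-- Left action of `A**` on `X**` (first Arens extension). -/
noncomputable def modL2 (M : BanachBimodule A X) :
    Dual ℝ (Dual ℝ A) →L[ℝ] Dual ℝ (Dual ℝ X) →L[ℝ] Dual ℝ (Dual ℝ X) :=
  ext3 M.l

/-- Right action of `A**` on `X**` (first Arens extension); `modR2 M x'' a'' = x''a''`. -/
noncomputable def modR2 (M : BanachBimodule A X) :
    Dual ℝ (Dual ℝ X) →L[ℝ] Dual ℝ (Dual ℝ A) →L[ℝ] Dual ℝ (Dual ℝ X) :=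
  ext3 M.r

/-- Left action of `A**` on `X***`: `⟨a''·x''', x''⟩ = ⟨x''', x''a''⟩`. -/
noncomputable def modL3 (M : BanachBimodule A X) :
    Dual ℝ (Dual ℝ A) →L[ℝ] Dual ℝ (Dual ℝ (Dual ℝ X)) →L[ℝ] Dual ℝ (Dual ℝ (Dual ℝ X)) :=
  (ext1 (modR2 M).flip).flip

/-- Right action of `A**` on `X***`: `⟨x'''·a'', x''⟩ = ⟨x''', a''x''⟩`. -/
noncomputable def modR3 (M : BanachBimodule A X) :
    Dual ℝ (Dual ℝ (Dual ℝ X)) →L[ℝ] Dual ℝ (Dual ℝ A) →L[ℝ] Dual ℝ (Dual ℝ (Dual ℝ X)) :=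
  ext1 (modL2 M)

end BimoduleSetup

section DerivationSetup

variable {B Y : Type*} [SeminormedAddCommGroup B] [NormedSpace ℝ B]
  [SeminormedAddCommGroup Y] [NormedSpace ℝ Y]

/-- `D` is a derivation with respect to the multiplication `m` and the module
actions `l`, `r`. -/
def IsDeriv (m : B →L[ℝ] B →L[ℝ] B) (l : B →L[ℝ] Y →L[ℝ] Y)
    (r : Y →L[ℝ] B →L[ℝ] Y) (D : B →L[ℝ] Y) : Prop :=
  ∀ a b, D (m a b) = l a (D b) + r (D a) b

/-- `D` is an inner derivation: `D a = a·y − y·a` for some fixed `y`. -/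
def IsInner (l : B →L[ℝ] Y →L[ℝ] Y) (r : Y →L[ℝ] B →L[ℝ] Y) (D : B →L[ℝ] Y) : Prop :=
  ∃ y, ∀ a, D a = l a y - r y a

/-- `D` is a `T-S`-derivation: `D(ab) = T(a)·D(b) + D(a)·S(b)`. -/
def IsTSDeriv (m : B →L[ℝ] B →L[ℝ] B) (l : B →L[ℝ] Y →L[ℝ] Y)
    (r : Y →L[ℝ] B →L[ℝ] Y) (T S : B →L[ℝ] B) (D : B →L[ℝ] Y) : Prop :=
  ∀ a b, D (m a b) = l (T a) (D b) + r (D a) (S b)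

/-- `D` is an inner `T-S`-derivation: `D a = T(a)·y − y·S(a)` for some fixed `y`. -/
def IsTSInner (l : B →L[ℝ] Y →L[ℝ] Y) (r : Y →L[ℝ] B →L[ℝ] Y)
    (T S : B →L[ℝ] B) (D : B →L[ℝ] Y) : Prop :=
  ∃ y, ∀ a, D a = l (T a) y - r y (S a)

end DerivationSetup


section Helpers
open Filter Topology ContinuousLinearMap NormedSpace


open NormedSpace

theorem helly_aux (E : Type*) [SeminormedAddCommGroup E] [NormedSpace ℝ E]
    (b : Dual ℝ (Dual ℝ E)) (s : Finset (Dual ℝ E)) :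
    ∃ a : E, ∀ φ ∈ s, φ a = b φ := by
  classical
  let T : E →ₗ[ℝ] (↥s → ℝ) :=
    LinearMap.pi (fun φ : ↥s => ((φ : Dual ℝ E) : E →ₗ[ℝ] ℝ))
  let v : ↥s → ℝ := fun φ => b (φ : Dual ℝ E)
  have hv : v ∈ LinearMap.range T := by
    by_contra hv
    set p := LinearMap.range T with hp
    have hq : p.mkQ v ≠ 0 := by
      simpa [Submodule.mkQ_apply, Submodule.Quotient.mk_eq_zero] using hv
    obtain ⟨g, hg⟩ : ∃ g : Module.Dual ℝ ((↥s → ℝ) ⧸ p), g (p.mkQ v) ≠ 0 := by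
      by_contra h
      push_neg at h
      exact hq ((Module.forall_dual_apply_eq_zero_iff ℝ _).mp h)
    set f : (↥s → ℝ) →ₗ[ℝ] ℝ := g ∘ₗ p.mkQ with hf
    have hf0 : ∀ a : E, f (T a) = 0 := by
      intro a
      have hmem : T a ∈ p := LinearMap.mem_range_self T a
      have : p.mkQ (T a) = 0 := by
        simpa [Submodule.mkQ_apply, Submodule.Quotient.mk_eq_zero] using hmem
      simp [hf, this]
    set Φ : Dual ℝ E := ∑ i : ↥s, f (fun j => if i = j then (1:ℝ) else 0) • (i : Dual ℝ E)
      with hΦdef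
    have hΦ : Φ = 0 := by
      refine ContinuousLinearMap.ext fun a => ?_
      have hsum := LinearMap.pi_apply_eq_sum_univ f (T a)
      have : Φ a = f (T a) := by
        rw [hsum, hΦdef]
        have key : ∀ (g : ↥s → (E →L[ℝ] ℝ)) (c : ↥s → ℝ),
            (∑ i, c i • g i) a = ∑ i, c i * g i a := fun g c => by simp
        refine (key (fun i => ((i : Dual ℝ E) : E →L[ℝ] ℝ))
          (fun i => f fun j => if i = j then (1:ℝ) else 0)).trans ?_
        simp only [smul_eq_mul]
        refine Finset.sum_congr rfl fun i _ => ?_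
        have : T a i = (i : Dual ℝ E) a := rfl
        rw [this, mul_comm]
        rfl
      exact this.trans ((hf0 a).trans rfl)
    have hbΦ : b Φ = f v := by
      rw [hΦdef, map_sum]
      have hsum := LinearMap.pi_apply_eq_sum_univ f v
      rw [hsum]
      refine Finset.sum_congr rfl fun i _ => ?_
      rw [map_smul]
      simp [v, smul_eq_mul, mul_comm]
    rw [hΦ] at hbΦ
    simp only [map_zero] at hbΦ
    exact hg (by simpa [hf, Submodule.mkQ_apply] using hbΦ.symm)
  obtain ⟨a, ha⟩ := hv
  exact ⟨a, fun φ hφ => congrFun ha ⟨φ, hφ⟩⟩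

theorem dense_inclusion (E : Type*) [SeminormedAddCommGroup E] [NormedSpace ℝ E] :
    Dense (Set.range fun a : E =>
      StrongDual.toWeakDual (inclusionInDoubleDual ℝ E a)) := by
  intro b
  choose a ha using fun s : Finset (Dual ℝ E) => helly_aux E (WeakDual.toStrongDual b) s
  refine mem_closure_of_tendsto (f := fun s : Finset (Dual ℝ E) =>
      StrongDual.toWeakDual (inclusionInDoubleDual ℝ E (a s))) (b := atTop) ?_
    (Filter.Eventually.of_forall fun s => ⟨a s, rfl⟩)
  rw [tendsto_iff_forall_eval_tendsto_topDualPairing]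
  intro φ
  refine tendsto_const_nhds.congr' ?_
  filter_upwards [Filter.eventually_ge_atTop ({φ} : Finset (Dual ℝ E))] with s hs
  exact (ha s φ (hs (Finset.mem_singleton_self φ))).symm

end Helpers

section Statements
set_option maxHeartbeats 1000000
open Filter Topology ContinuousLinearMap NormedSpace

variable {A : Type*} [NonUnitalNormedRing A] [NormedSpace ℝ A]
  [SMulCommClass ℝ A A] [IsScalarTower ℝ A A] [CompleteSpace A]

variable {X : Type*} [NormedAddCommGroup X] [NormedSpace ℝ X] [CompleteSpace X]

/-- If `a'' ↦ x''a''` is weak-star to weak continuous for all `x'' ∈ X**`, then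
`H¹(A**, X***) = 0` implies `H¹(A, X*) = 0`. -/
theorem cohomology_vanishing_descends (M : BanachBimodule A X)
    (hw : ∀ x'' : Dual ℝ (Dual ℝ X), WStarToWCont (fun a'' => modR2 M x'' a''))
    (hcoh : ∀ G : Dual ℝ (Dual ℝ A) →L[ℝ] Dual ℝ (Dual ℝ (Dual ℝ X)),
      IsDeriv (fArens A) (modL3 M) (modR3 M) G → IsInner (modL3 M) (modR3 M) G) :
    ∀ D : A →L[ℝ] Dual ℝ X,
      IsDeriv (ContinuousLinearMap.mul ℝ A) (modDualLeft M) (modDualRight M) D →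
      IsInner (modDualLeft M) (modDualRight M) D := by
  intro D hD
  classical
  -- Step 1: the basic identity at the level of A × A
  have hAB : ∀ (a b : A) (x'' : Dual ℝ (Dual ℝ X)),
      adjCLM (adjCLM D) (fArens A (inclusionInDoubleDual ℝ A a) (inclusionInDoubleDual ℝ A b)) x''
        = adjCLM (adjCLM D) (inclusionInDoubleDual ℝ A b)
            (modR2 M x'' (inclusionInDoubleDual ℝ A a))
          + adjCLM (adjCLM D) (inclusionInDoubleDual ℝ A a)
            (modL2 M (inclusionInDoubleDual ℝ A b) x'') := by
    intro a b x''
    have I1 : fArens A (inclusionInDoubleDual ℝ A a) (inclusionInDoubleDual ℝ A b)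
        = inclusionInDoubleDual ℝ A (a * b) := ContinuousLinearMap.ext fun g => rfl
    have e2 : ext1 (ext1 M.r) (inclusionInDoubleDual ℝ A a) (D b)
        = modDualLeft M a (D b) := ContinuousLinearMap.ext fun _ => rfl
    rw [I1]
    show x'' (D (a * b)) = x'' (ext1 (ext1 M.r) (inclusionInDoubleDual ℝ A a) (D b))
      + x'' (modDualRight M (D a) b)
    rw [e2, ← map_add]
    exact congrArg x'' (hD a b)
  -- Step 2: extend in the second variable by weak-star density
  have hB : ∀ (a : A) (b'' : Dual ℝ (Dual ℝ A)) (x'' : Dual ℝ (Dual ℝ X)),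
      adjCLM (adjCLM D) (fArens A (inclusionInDoubleDual ℝ A a) b'') x''
        = adjCLM (adjCLM D) b'' (modR2 M x'' (inclusionInDoubleDual ℝ A a))
          + adjCLM (adjCLM D) (inclusionInDoubleDual ℝ A a) (modL2 M b'' x'') := by
    intro a b'' x''
    have hc1 : Continuous fun w : WeakDual ℝ (Dual ℝ A) =>
        adjCLM (adjCLM D) (fArens A (inclusionInDoubleDual ℝ A a) (WeakDual.toStrongDual w)) x'' :=
      WeakDual.eval_continuous
        (ext1 (ContinuousLinearMap.mul ℝ A) (adjCLM D x'') a)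
    have hc2 : Continuous fun w : WeakDual ℝ (Dual ℝ A) =>
        adjCLM (adjCLM D) (WeakDual.toStrongDual w)
          (modR2 M x'' (inclusionInDoubleDual ℝ A a)) :=
      WeakDual.eval_continuous (adjCLM D (modR2 M x'' (inclusionInDoubleDual ℝ A a)))
    have hc3 : Continuous fun w : WeakDual ℝ (Dual ℝ A) =>
        adjCLM (adjCLM D) (inclusionInDoubleDual ℝ A a)
          (modL2 M (WeakDual.toStrongDual w) x'') :=
      WeakDual.eval_continuous (ext1 (ext1 M.l) x'' (D a))
    have heq := Continuous.ext_on (dense_inclusion A) hc1 (hc2.add hc3) ?_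
    · exact congrFun heq (StrongDual.toWeakDual b'')
    · rintro _ ⟨c, rfl⟩
      exact hAB a c x''
  -- Step 3: extend in the first variable by weak-star density
  have hA : ∀ (a'' b'' : Dual ℝ (Dual ℝ A)) (x'' : Dual ℝ (Dual ℝ X)),
      adjCLM (adjCLM D) (fArens A a'' b'') x''
        = adjCLM (adjCLM D) b'' (modR2 M x'' a'')
          + adjCLM (adjCLM D) a'' (modL2 M b'' x'') := by
    intro a'' b'' x''
    have hc1 : Continuous fun w : WeakDual ℝ (Dual ℝ A) =>
        adjCLM (adjCLM D) (fArens A (WeakDual.toStrongDual w) b'') x'' :=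
      WeakDual.eval_continuous
        (ext1 (ext1 (ContinuousLinearMap.mul ℝ A)) b'' (adjCLM D x''))
    have hy : Continuous fun z : WeakSpace ℝ (Dual ℝ (Dual ℝ X)) =>
        adjCLM (adjCLM D) b'' ((toWeakSpace ℝ (Dual ℝ (Dual ℝ X))).symm z) :=
      WeakBilin.eval_continuous _ (adjCLM (adjCLM D) b'')
    have hc2 : Continuous fun w : WeakDual ℝ (Dual ℝ A) =>
        adjCLM (adjCLM D) b'' (modR2 M x'' (WeakDual.toStrongDual w)) :=
      hy.comp (hw x'')
    have hc3 : Continuous fun w : WeakDual ℝ (Dual ℝ A) =>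
        adjCLM (adjCLM D) (WeakDual.toStrongDual w) (modL2 M b'' x'') :=
      WeakDual.eval_continuous (adjCLM D (modL2 M b'' x''))
    have heq := Continuous.ext_on (dense_inclusion A) hc1 (hc2.add hc3) ?_
    · exact congrFun heq (StrongDual.toWeakDual a'')
    · rintro _ ⟨c, rfl⟩
      exact hB c b'' x''
  -- Step 4: the second adjoint is a derivation
  have hder : IsDeriv (fArens A) (modL3 M) (modR3 M) (adjCLM (adjCLM D)) := by
    intro a'' b''
    refine ContinuousLinearMap.ext fun x'' => ?_
    show _ = (modL3 M a'' (adjCLM (adjCLM D) b'')) x'' + (modR3 M (adjCLM (adjCLM D) a'') b'') x''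
    exact hA a'' b'' x''
  obtain ⟨y, hy⟩ := hcoh (adjCLM (adjCLM D)) hder
  refine ⟨adjCLM (inclusionInDoubleDual ℝ X) y, fun a => ?_⟩
  refine ContinuousLinearMap.ext fun x => ?_
  have h := congrArg (fun F => F (inclusionInDoubleDual ℝ X x))
    (hy (inclusionInDoubleDual ℝ A a))
  have c1 : modR2 M (inclusionInDoubleDual ℝ X x) (inclusionInDoubleDual ℝ A a)
      = inclusionInDoubleDual ℝ X (M.r x a) := ContinuousLinearMap.ext fun g => rfl
  have c2 : modL2 M (inclusionInDoubleDual ℝ A a) (inclusionInDoubleDual ℝ X x)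
      = inclusionInDoubleDual ℝ X (M.l a x) := ContinuousLinearMap.ext fun g => rfl
  show D a x = modDualLeft M a (adjCLM (inclusionInDoubleDual ℝ X) y) x
    - modDualRight M (adjCLM (inclusionInDoubleDual ℝ X) y) a x
  calc D a x
      = adjCLM (adjCLM D) (inclusionInDoubleDual ℝ A a) (inclusionInDoubleDual ℝ X x) := rfl
    _ = modL3 M (inclusionInDoubleDual ℝ A a) y (inclusionInDoubleDual ℝ X x)
        - modR3 M y (inclusionInDoubleDual ℝ A a) (inclusionInDoubleDual ℝ X x) := h
    _ = y (modR2 M (inclusionInDoubleDual ℝ X x) (inclusionInDoubleDual ℝ A a))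
        - y (modL2 M (inclusionInDoubleDual ℝ A a) (inclusionInDoubleDual ℝ X x)) := rfl
    _ = y (inclusionInDoubleDual ℝ X (M.r x a)) - y (inclusionInDoubleDual ℝ X (M.l a x)) := by
        rw [c1, c2]
    _ = modDualLeft M a (adjCLM (inclusionInDoubleDual ℝ X) y) x
        - modDualRight M (adjCLM (inclusionInDoubleDual ℝ X) y) a x := rfl


end Statements
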